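/- arXiv:2405.00761 — 2 statements merged into one kernel-verified Lean document; each statement's English description precedes it below -/
import Mathlib

section
/- With λ, a_k, A_k as in the harmonic lift setup (λ = ∂_z∂_z̄ log λ, a_k = −λ⁻¹∂_k∂_z̄ log λ, A_k = ∂_z̄ a_k), define the Laplace-type operator □ = −λ⁻¹∂_z∂_z̄ and the commutator operator ξ_k(f) = −λ⁻¹∂_z(A_k ∂_z f) on smooth functions f. Then (□+1)v_k − v_k(□+1) = □v_k − v_k□ = ξ_k as operators on smooth functions, where v_k = ∂_k + a_k∂_z, given the identity ∂_z a_k = −λ⁻¹(∂_z λ) a_k − λ⁻¹ ∂_k λ. -/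
variable {A : Type*} [CommRing A] [Algebra ℂ A]

/-- The operator `□ = -λ⁻¹ ∂_z ∂_z̄` (with `linv = λ⁻¹`). -/
def boxOp (linv : A) (Dz Dzb : Derivation ℂ A A) (f : A) : A := -(linv * Dz (Dzb f))

/-- The harmonic lift `v_k = ∂_k + a_k ∂_z`. -/
def vOp (ak : A) (Dk Dz : Derivation ℂ A A) (f : A) : A := Dk f + ak * Dz f

/-- The commutator operator `ξ_k(f) = -λ⁻¹ ∂_z(A_k ∂_z f)` with `A_k = ∂_z̄ a_k`. -/
def xiOp (linv ak : A) (Dz Dzb : Derivation ℂ A A) (f : A) : A :=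
  -(linv * Dz (Dzb ak * Dz f))

/-- `(□+1)v_k - v_k(□+1) = □v_k - v_k□ = ξ_k` as operators on smooth
functions, given the Kähler–Einstein identity `∂_z a_k = -λ⁻¹(∂_z λ)a_k - λ⁻¹ ∂_k λ`. -/
theorem box_v_commutator
    (Dz Dzb Dk : Derivation ℂ A A)
    (h1 : ∀ f : A, Dz (Dzb f) = Dzb (Dz f))
    (h2 : ∀ f : A, Dk (Dz f) = Dz (Dk f))
    (h3 : ∀ f : A, Dk (Dzb f) = Dzb (Dk f))
    (lam linv ak : A) (hinv : lam * linv = 1)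
    (hak : Dz ak = -(linv * Dz lam * ak) - linv * Dk lam) :
    ∀ f : A,
      (boxOp linv Dz Dzb (vOp ak Dk Dz f) + vOp ak Dk Dz f)
          - vOp ak Dk Dz (boxOp linv Dz Dzb f + f)
        = xiOp linv ak Dz Dzb f
      ∧ boxOp linv Dz Dzb (vOp ak Dk Dz f) - vOp ak Dk Dz (boxOp linv Dz Dzb f)
        = xiOp linv ak Dz Dzb f := by
  have hz : Dz linv = -(linv * linv * Dz lam) := by
    have h0 := congrArg Dz hinv
    rw [Derivation.leibniz, Derivation.map_one_eq_zero] at h0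
    simp only [smul_eq_mul] at h0
    linear_combination linv * h0 - Dz linv * hinv
  have hk : Dk linv = -(linv * linv * Dk lam) := by
    have h0 := congrArg Dk hinv
    rw [Derivation.leibniz, Derivation.map_one_eq_zero] at h0
    simp only [smul_eq_mul] at h0
    linear_combination linv * h0 - Dk linv * hinv
  intro f
  have key : boxOp linv Dz Dzb (vOp ak Dk Dz f) - vOp ak Dk Dz (boxOp linv Dz Dzb f)
      = xiOp linv ak Dz Dzb f := by
    simp only [boxOp, vOp, xiOp, map_add, map_neg, Derivation.leibniz, smul_eq_mul, map_mul]
    rw [h2 (Dzb f), h3 f, h1 (Dk f), h1 f, hak, hz, hk]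
    ring
  refine ⟨?_, key⟩
  have hadd : vOp ak Dk Dz (boxOp linv Dz Dzb f + f)
      = vOp ak Dk Dz (boxOp linv Dz Dzb f) + vOp ak Dk Dz f := by
    simp only [vOp, map_add]; ring
  rw [hadd]
  linear_combination key
end

section
/- Let A and B be positive definite n×n Hermitian matrices and α, β > 0 constants such that B ≥ αA (i.e., B − αA is positive semidefinite) and det(B) ≤ β·det(A). Then there exists a constant γ > 0 depending only on α, β, and n such that B ≤ γA. -/
open scoped ComplexOrder

set_option maxHeartbeats 1600000 in
open Matrix in
/-- Let `A`, `B` be positive definite `n×n` Hermitian matrices with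
`B ≥ αA` (i.e. `B - αA` positive semidefinite) and `det B ≤ β det A` (determinants
of positive definite matrices are real and positive).  Then there is a constant
`γ > 0` depending only on `α`, `β`, `n` with `B ≤ γA`. -/
theorem posdef_det_comparison (n : ℕ) (α β : ℝ) (hα : 0 < α) (hβ : 0 < β) :
    ∃ γ : ℝ, 0 < γ ∧ ∀ A B : Matrix (Fin n) (Fin n) ℂ,
      A.PosDef → B.PosDef → (B - α • A).PosSemidef → B.det.re ≤ β * A.det.re →
      (γ • A - B).PosSemidef := by
  refine ⟨β / α ^ (n - 1), div_pos hβ (pow_pos hα _), fun A B hA hB h1 h2 => ?_⟩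
  set γ : ℝ := β / α ^ (n - 1) with hγdef
  -- square root of A
  set S : Matrix (Fin n) (Fin n) ℂ := (open scoped MatrixOrder in CFC.sqrt A) with hSdef
  have hSherm : S.IsHermitian := (open scoped MatrixOrder in (CFC.sqrt_nonneg A).posSemidef.1)
  have hSS : S * S = A := (open scoped MatrixOrder in CFC.sqrt_mul_sqrt_self A hA.posSemidef.nonneg)
  have hdetS : IsUnit S.det := by
    rw [isUnit_iff_ne_zero]
    intro h
    have : A.det = 0 := by rw [← hSS, det_mul, h, mul_zero]
    exact hA.det_pos.ne' this
  have hTS : S⁻¹ * S = 1 := nonsing_inv_mul S hdetS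
  have hST : S * S⁻¹ = 1 := mul_nonsing_inv S hdetS
  have hTherm : (S⁻¹).IsHermitian := hSherm.inv
  set T : Matrix (Fin n) (Fin n) ℂ := S⁻¹ with hTdef
  set C : Matrix (Fin n) (Fin n) ℂ := T * B * T with hCdef
  have hCT : Tᴴ = T := hTherm
  have hCpsd : C.PosSemidef := by
    have := hB.posSemidef.mul_mul_conjTranspose_same T
    rwa [hCT] at this
  have hCherm : C.IsHermitian := hCpsd.1
  have hTAT : T * A * T = 1 := by
    rw [← hSS, ← mul_assoc T S S, hTS, one_mul, hST]
  -- C - α • 1 is PSD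
  have hshift : (C - α • 1).PosSemidef := by
    have := h1.mul_mul_conjTranspose_same T
    rw [hCT] at this
    have e : T * (B - α • A) * T = C - α • 1 := by
      rw [Matrix.mul_sub, Matrix.sub_mul, hCdef]
      congr 1
      rw [Matrix.mul_smul, Matrix.smul_mul, hTAT]
    rwa [e] at this
  -- spectral data of C
  set U : Matrix (Fin n) (Fin n) ℂ := (hCherm.eigenvectorUnitary : Matrix (Fin n) (Fin n) ℂ)
    with hUdef
  set lam : Fin n → ℝ := hCherm.eigenvalues with hlamdef
  have hUU : star U * U = 1 := Matrix.mem_unitaryGroup_iff'.mp hCherm.eigenvectorUnitary.2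
  have hUU' : U * star U = 1 := Matrix.mem_unitaryGroup_iff.mp hCherm.eigenvectorUnitary.2
  have hdiag : star U * C * U = Matrix.diagonal (fun i => (lam i : ℂ)) :=
    by
      have := hCherm.conjStarAlgAut_star_eigenvectorUnitary
      rw [Unitary.conjStarAlgAut_apply, Unitary.coe_star, star_star] at this
      exact this
  -- each eigenvalue is at least α
  have hlam_ge : ∀ i, α ≤ lam i := by
    intro i
    have hp := hshift.conjTranspose_mul_mul_same U
    have e : Uᴴ * (C - α • 1) * U = Matrix.diagonal (fun i => ((lam i - α : ℝ) : ℂ)) := by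
      rw [Matrix.star_eq_conjTranspose] at hdiag
      rw [Matrix.mul_sub, Matrix.sub_mul, hdiag, Matrix.mul_smul, Matrix.smul_mul, Matrix.mul_one,
        ← Matrix.star_eq_conjTranspose, hUU]
      ext j k
      by_cases h : j = k <;>
        simp [Matrix.diagonal, h, Complex.real_smul, Matrix.one_apply, sub_mul]
    rw [e] at hp
    have := Matrix.posSemidef_diagonal_iff.mp hp i
    have h0 : (0:ℝ) ≤ lam i - α := by exact_mod_cast this
    linarith
  have hlam_pos : ∀ i, 0 < lam i := fun i => lt_of_lt_of_le hα (hlam_ge i)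
  -- product of eigenvalues is at most β
  have hprod : (∏ i, lam i) ≤ β := by
    have hdetC : C.det = ((∏ i, lam i : ℝ) : ℂ) := by
      rw [hCherm.det_eq_prod_eigenvalues]
      push_cast
      rfl
    have hdetA : A.det = S.det * S.det := by rw [← hSS, det_mul]
    have hd0 : S.det ≠ 0 := hdetS.ne_zero
    have hCA : C.det * A.det = B.det := by
      rw [hCdef, det_mul, det_mul, hdetA, Matrix.det_nonsing_inv, Ring.inverse_eq_inv']
      field_simp
    have hApos : 0 < A.det := hA.det_pos
    have hAre : 0 < A.det.re := by
      rw [Complex.lt_def] at hApos; exact hApos.1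
    have hAim : A.det.im = 0 := by
      rw [Complex.lt_def] at hApos; exact hApos.2.symm
    have hBre : (∏ i, lam i) * A.det.re = B.det.re := by
      have := congrArg Complex.re hCA
      rw [hdetC, Complex.mul_re] at this
      simpa [hAim, ← Complex.ofReal_prod] using this
    nlinarith [h2, hBre, hAre]
  -- each eigenvalue is at most γ
  have hlam_le : ∀ j, lam j ≤ γ := by
    intro j
    have hcard : (Finset.univ.erase j).card = n - 1 := by
      rw [Finset.card_erase_of_mem (Finset.mem_univ j), Finset.card_univ, Fintype.card_fin]
    have hrest : α ^ (n - 1) ≤ ∏ i ∈ Finset.univ.erase j, lam i := by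
      rw [← hcard, ← Finset.prod_const]
      exact Finset.prod_le_prod (fun i _ => le_of_lt hα) (fun i _ => hlam_ge i)
    have hsplit : lam j * ∏ i ∈ Finset.univ.erase j, lam i = ∏ i, lam i := by
      rw [← Finset.prod_erase_mul Finset.univ _ (Finset.mem_univ j)]; ring
    have h3 : lam j * α ^ (n - 1) ≤ β := by
      calc lam j * α ^ (n - 1) ≤ lam j * ∏ i ∈ Finset.univ.erase j, lam i :=
            mul_le_mul_of_nonneg_left hrest (le_of_lt (hlam_pos j))
        _ = ∏ i, lam i := hsplit
        _ ≤ β := hprod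
    rw [hγdef, le_div_iff₀ (pow_pos hα _)]
    exact h3
  -- γ • 1 - C is PSD
  have hgC : (γ • 1 - C).PosSemidef := by
    have hD : (Matrix.diagonal (fun i => ((γ - lam i : ℝ) : ℂ))).PosSemidef := by
      rw [Matrix.posSemidef_diagonal_iff]
      intro i
      have : (0:ℝ) ≤ γ - lam i := by linarith [hlam_le i]
      exact_mod_cast this
    have := hD.mul_mul_conjTranspose_same U
    have e : U * Matrix.diagonal (fun i => ((γ - lam i : ℝ) : ℂ)) * Uᴴ = γ • 1 - C := by
      have hspec : C = U * Matrix.diagonal (fun i => (lam i : ℂ)) * star U :=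
        by
          have := hCherm.spectral_theorem
          rw [Unitary.conjStarAlgAut_apply] at this
          exact this
      rw [← Matrix.star_eq_conjTranspose]
      have ed : Matrix.diagonal (fun i => ((γ - lam i : ℝ) : ℂ))
          = γ • 1 - Matrix.diagonal (fun i => (lam i : ℂ)) := by
        ext j k
        by_cases h : j = k <;>
          simp [Matrix.diagonal, h, Complex.real_smul, Matrix.one_apply]
      rw [ed, Matrix.mul_sub, Matrix.sub_mul, ← hspec, Matrix.mul_smul, Matrix.smul_mul,
        Matrix.mul_one, hUU']
    rwa [e] at this
  -- conjugate back by S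
  have := hgC.mul_mul_conjTranspose_same S
  rw [hSherm.eq] at this
  have e : S * (γ • 1 - C) * S = γ • A - B := by
    rw [Matrix.mul_sub, Matrix.sub_mul, Matrix.mul_smul, Matrix.smul_mul, Matrix.mul_one, hSS]
    congr 1
    rw [hCdef, ← mul_assoc, ← mul_assoc, hST, one_mul, mul_assoc, hTS, mul_one]
  rwa [e] at this
end
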